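/- Let G be a finite abelian group. Suppose there exist a tile Ω of G, an integer n ≥ 2, and pairwise distinct tiling complements T_0, T_1, …, T_{n-1} ∈ 𝒯_Ω such that: (i) there is no nonzero g ∈ G with T_i + g = T_i for all i = 0, …, n−1 (the T_i do not share a common period), and (ii) no element of the intersection ⋂_{i=0}^{n-1} 𝒯_{T_i} is periodic. Then for every integer m with m ≥ n and gcd(m, |G|) = 1, the group G × Z_m does not have the periodic tiling (PT) property. -/

import Mathlib

/-- `(Ω, T)` is a tiling pair of the abelian group `G`: every element of `G`
has a unique representation `ω + t` with `ω ∈ Ω`, `t ∈ T`. -/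
def IsTilingPair {G : Type*} [AddCommGroup G] (Ω T : Set G) : Prop :=
  ∀ g : G, ∃! p : G × G, p.1 ∈ Ω ∧ p.2 ∈ T ∧ p.1 + p.2 = g

/-- A nonempty subset `A` of `G` is periodic if `A + g = A` for some nonzero `g`. -/
def IsPeriodic {G : Type*} [AddCommGroup G] (A : Set G) : Prop :=
  A.Nonempty ∧ ∃ g : G, g ≠ 0 ∧ (fun a => a + g) '' A = A

/-- `Ω` is a tile of `G` if it has a tiling complement. -/
def IsTile {G : Type*} [AddCommGroup G] (Ω : Set G) : Prop :=
  ∃ T : Set G, IsTilingPair Ω T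

/-- `G` has the periodic tiling (PT) property: for every tiling pair `(Ω, T)`,
either `Ω` is periodic, or `T` can be replaced by a periodic tiling complement. -/
def HasPT (G : Type*) [AddCommGroup G] : Prop :=
  ∀ Ω T : Set G, IsTilingPair Ω T →
    IsPeriodic Ω ∨ ∃ T' : Set G, IsPeriodic T' ∧ IsTilingPair Ω T'

/-- A tile `Ω` is uniformly periodic if all its tiling complements share a
common nonzero period. -/
def UniformlyPeriodic {G : Type*} [AddCommGroup G] (Ω : Set G) : Prop :=
  ∃ g : G, g ≠ 0 ∧ ∀ T : Set G, IsTilingPair Ω T → (fun t => t + g) '' T = T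

/-- A tile `Ω` is dual uniformly periodic if there is a periodic tile `Ω'`
which is a tiling complement of every tiling complement of `Ω`. -/
def DualUniformlyPeriodic {G : Type*} [AddCommGroup G] (Ω : Set G) : Prop :=
  ∃ Ω' : Set G, IsPeriodic Ω' ∧ IsTile Ω' ∧
    ∀ T : Set G, IsTilingPair Ω T → IsTilingPair Ω' T

/-- `G` has the uniformly periodic tiling (UPT) property: every tile of `G`
is either uniformly periodic or dual uniformly periodic. -/
def HasUPT (G : Type*) [AddCommGroup G] : Prop :=
  ∀ Ω : Set G, IsTile Ω → UniformlyPeriodic Ω ∨ DualUniformlyPeriodic Ω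

namespace TilingAux

theorem existsUnique_iff_natCard {α : Type*} (P : α → Prop) :
    (∃! a, P a) ↔ Nat.card {a // P a} = 1 := by
  rw [Nat.card_eq_one_iff_unique]
  constructor
  · rintro ⟨a, ha, hu⟩
    refine ⟨⟨fun x y => Subtype.ext ((hu x.1 x.2).trans (hu y.1 y.2).symm)⟩, ⟨a, ha⟩⟩
  · rintro ⟨hs, ⟨a, ha⟩⟩
    exact ⟨a, ha, fun y hy => congrArg Subtype.val (hs.allEq ⟨y, hy⟩ ⟨a, ha⟩)⟩

theorem natCard_empty_of_not_mem {α : Type*} (P : α → Prop) (h : ∀ a, ¬ P a) :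
    Nat.card {a // P a} = 0 := by
  have : IsEmpty {a // P a} := ⟨fun a => h a.1 a.2⟩
  exact Nat.card_of_isEmpty

variable {H : Type*} [AddCommGroup H]

theorem tiling_symm {A B : Set H} (h : IsTilingPair A B) : IsTilingPair B A := by
  intro x
  obtain ⟨⟨a, b⟩, ⟨h1, h2, h3⟩, hu⟩ := h x
  refine ⟨(b, a), ⟨h2, h1, by rw [add_comm]; exact h3⟩, ?_⟩
  rintro ⟨b', a'⟩ ⟨k1, k2, k3⟩
  have := hu (a', b') ⟨k2, k1, by rw [add_comm]; exact k3⟩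
  simp only [Prod.mk.injEq] at this ⊢
  exact ⟨this.2, this.1⟩

theorem tiling_nonempty_left {A B : Set H} (h : IsTilingPair A B) : A.Nonempty := by
  obtain ⟨q, ⟨h1, -, -⟩, -⟩ := h 0; exact ⟨q.1, h1⟩

theorem tiling_nonempty_right {A B : Set H} (h : IsTilingPair A B) : B.Nonempty := by
  obtain ⟨q, ⟨-, h2, -⟩, -⟩ := h 0; exact ⟨q.2, h2⟩

theorem shift_mem_iff {S : Set H} {v : H} (h : (fun x => x + v) '' S = S) (x : H) :
    x ∈ S ↔ x + v ∈ S := by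
  constructor
  · intro hx; rw [← h]; exact ⟨x, hx, rfl⟩
  · intro hx
    rw [← h] at hx
    obtain ⟨y, hy, hyx⟩ := hx
    have hxy : y = x := add_right_cancel (hyx : y + v = x + v)
    rwa [← hxy]

theorem shift_mem_iff_nsmul {S : Set H} {v : H} (h : (fun x => x + v) '' S = S)
    (r : ℕ) (x : H) : x ∈ S ↔ x + r • v ∈ S := by
  induction r with
  | zero => simp
  | succ r ih =>
    rw [succ_nsmul, ← add_assoc]
    exact ih.trans (shift_mem_iff h _)

theorem image_shift_eq {S : Set H} {v : H} (h : ∀ x, x ∈ S ↔ x + v ∈ S) :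
    (fun x => x + v) '' S = S := by
  ext y
  constructor
  · rintro ⟨x, hx, rfl⟩; exact (h x).mp hx
  · intro hy
    exact ⟨y - v, (h (y - v)).mpr (by rwa [sub_add_cancel]), sub_add_cancel y v⟩

variable [Fintype H]

theorem sum_natCard_fibers {α : Type*} [Finite α] (f : α → H) :
    ∑ x : H, Nat.card {a // f a = x} = Nat.card α := by
  classical
  letI : Fintype α := Fintype.ofFinite α
  rw [Nat.card_eq_fintype_card, ← Fintype.card_congr (Equiv.sigmaFiberEquiv f),
    Fintype.card_sigma]
  refine Finset.sum_congr rfl fun x _ => ?_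
  rw [Nat.card_eq_fintype_card]

theorem natCard_pair_set (A B : Set H) :
    Nat.card {q : H × H // q.1 ∈ A ∧ q.2 ∈ B} = Nat.card A * Nat.card B := by
  rw [← Nat.card_prod]
  exact Nat.card_congr (Equiv.subtypeProdEquivProd)

theorem sum_repr_counts (A B : Set H) (g : H → H) :
    ∑ x : H, Nat.card {q : H × H // q.1 ∈ A ∧ q.2 ∈ B ∧ q.1 + g q.2 = x}
      = Nat.card A * Nat.card B := by
  rw [← natCard_pair_set A B,
    ← sum_natCard_fibers (fun q : {q : H × H // q.1 ∈ A ∧ q.2 ∈ B} => q.1.1 + g q.1.2)]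
  refine Finset.sum_congr rfl fun x _ => Nat.card_congr ?_
  exact { toFun := fun ⟨q, h1, h2, h3⟩ => ⟨⟨q, h1, h2⟩, h3⟩
          invFun := fun ⟨⟨q, hq⟩, hx⟩ => ⟨q, hq.1, hq.2, hx⟩
          left_inv := fun ⟨q, h1, h2, h3⟩ => rfl
          right_inv := fun ⟨⟨q, hq⟩, hx⟩ => rfl }

theorem tiling_card_mul {A B : Set H} (h : IsTilingPair A B) :
    Nat.card A * Nat.card B = Fintype.card H := by
  rw [← sum_repr_counts A B id]
  have h1 : ∀ x : H, Nat.card {q : H × H // q.1 ∈ A ∧ q.2 ∈ B ∧ q.1 + id q.2 = x} = 1 := by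
    intro x
    rw [← existsUnique_iff_natCard]
    exact h x
  rw [Finset.sum_congr rfl fun x _ => h1 x]
  simp

theorem card_tuple_count {A B : Set H} (h : IsTilingPair A B) :
    ∀ (r : ℕ) (y : H),
      Nat.card {w : H × (Fin (r + 1) → H) //
        w.1 ∈ A ∧ (∀ i, w.2 i ∈ B) ∧ w.1 + ∑ i, w.2 i = y} = Nat.card B ^ r := by
  intro r
  induction r with
  | zero =>
    intro y
    rw [pow_zero, ← existsUnique_iff_natCard]
    obtain ⟨⟨a, b⟩, ⟨h1, h2, h3⟩, hu⟩ := h y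
    refine ⟨(a, fun _ => b), ⟨h1, fun _ => h2, by simpa [Fin.sum_univ_one] using h3⟩, ?_⟩
    rintro ⟨a', v⟩ ⟨k1, k2, k3⟩
    have hv : (a', v 0) = (a, b) := hu (a', v 0) ⟨k1, k2 0, by simpa [Fin.sum_univ_one] using k3⟩
    simp only [Prod.mk.injEq] at hv ⊢
    refine ⟨hv.1, funext fun i => ?_⟩
    have hi : i = 0 := by omega
    rw [hi]; exact hv.2
  | succ r ih =>
    intro y
    classical
    rw [← sum_natCard_fibers
      (fun w : {w : H × (Fin (r + 2) → H) //
        w.1 ∈ A ∧ (∀ i, w.2 i ∈ B) ∧ w.1 + ∑ i, w.2 i = y} => w.1.2 0)]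
    have hfib : ∀ v0 : H,
        Nat.card {w : {w : H × (Fin (r + 2) → H) //
          w.1 ∈ A ∧ (∀ i, w.2 i ∈ B) ∧ w.1 + ∑ i, w.2 i = y} // w.1.2 0 = v0}
        = if v0 ∈ B then Nat.card B ^ r else 0 := by
      intro v0
      have eflat : {w : {w : H × (Fin (r + 2) → H) //
          w.1 ∈ A ∧ (∀ i, w.2 i ∈ B) ∧ w.1 + ∑ i, w.2 i = y} // w.1.2 0 = v0}
          ≃ {w : H × (Fin (r + 2) → H) //
            (w.1 ∈ A ∧ (∀ i, w.2 i ∈ B) ∧ w.1 + ∑ i, w.2 i = y) ∧ w.2 0 = v0} :=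
        { toFun := fun ⟨⟨w, hw⟩, h0⟩ => ⟨w, hw, h0⟩
          invFun := fun ⟨w, hw, h0⟩ => ⟨⟨w, hw⟩, h0⟩
          left_inv := fun ⟨⟨w, hw⟩, h0⟩ => rfl
          right_inv := fun ⟨w, hw, h0⟩ => rfl }
      rw [Nat.card_congr eflat]
      by_cases hv0 : v0 ∈ B
      · rw [if_pos hv0, ← ih (y - v0)]
        have hcons_mem : ∀ (v : Fin (r+1) → H), (∀ i, v i ∈ B) → ∀ i, (Fin.cons v0 v : Fin (r+2) → H) i ∈ B := by
          intro v hb i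
          refine Fin.cases ?_ (fun j => ?_) i
          · rw [Fin.cons_zero]; exact hv0
          · rw [Fin.cons_succ]; exact hb j
        have hcons_sum : ∀ (a : H) (v : Fin (r+1) → H), a + ∑ i, v i = y - v0 →
            a + ∑ i, (Fin.cons v0 v : Fin (r+2) → H) i = y := by
          intro a v hs
          rw [Fin.sum_univ_succ, Fin.cons_zero]
          simp only [Fin.cons_succ]
          rw [eq_sub_iff_add_eq] at hs
          rw [← hs]; abel
        have htail_sum : ∀ (a : H) (v : Fin (r+2) → H), v 0 = v0 → a + ∑ i, v i = y →
            a + ∑ i : Fin (r+1), v i.succ = y - v0 := by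
          intro a v h0 hs
          rw [Fin.sum_univ_succ, h0] at hs
          rw [eq_sub_iff_add_eq, ← hs]
          abel
        refine Nat.card_congr
          { toFun := fun w => ⟨(w.1.1, fun i => w.1.2 i.succ), w.2.1.1,
              fun i => w.2.1.2.1 i.succ, htail_sum _ _ w.2.2 w.2.1.2.2⟩
            invFun := fun w => ⟨(w.1.1, Fin.cons v0 w.1.2),
              ⟨w.2.1, hcons_mem _ w.2.2.1, hcons_sum _ _ w.2.2.2⟩, by simp⟩
            left_inv := fun w => by
              refine Subtype.ext (Prod.ext rfl (funext fun i => ?_))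
              show (Fin.cons v0 (fun i => (w : H × (Fin (r+2) → H)).2 i.succ)
                  : Fin (r+2) → H) i = (w : H × (Fin (r+2) → H)).2 i
              refine Fin.cases ?_ (fun j => ?_) i
              · rw [Fin.cons_zero]; exact w.2.2.symm
              · rw [Fin.cons_succ]
            right_inv := fun w => by
              refine Subtype.ext (Prod.ext rfl (funext fun i => ?_))
              show (Fin.cons v0 ((w : H × (Fin (r+1) → H)).2)
                  : Fin (r+2) → H) i.succ = (w : H × (Fin (r+1) → H)).2 i
              rw [Fin.cons_succ] }
      · rw [if_neg hv0]
        refine natCard_empty_of_not_mem _ ?_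
        rintro ⟨a, v⟩ ⟨⟨ha, hb, hs⟩, h0⟩
        simp only at h0
        exact hv0 (h0 ▸ hb 0)
    rw [Finset.sum_congr rfl fun v0 _ => hfib v0]
    rw [Finset.sum_ite, Finset.sum_const, Finset.sum_const_zero, add_zero]
    have hcard : (Finset.univ.filter fun v0 : H => v0 ∈ B).card = Nat.card B := by
      rw [Nat.card_eq_fintype_card, Fintype.card_subtype]
    rw [hcard, smul_eq_mul, pow_succ, mul_comm]


theorem tuple_reindex {ι κ : Type*} [Fintype ι] [Fintype κ] (σ : ι ≃ κ)
    (A B : Set H) (y : H) :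
    Nat.card {w : H × (ι → H) // w.1 ∈ A ∧ (∀ i, w.2 i ∈ B) ∧ w.1 + ∑ i, w.2 i = y}
      = Nat.card {w : H × (κ → H) // w.1 ∈ A ∧ (∀ i, w.2 i ∈ B) ∧ w.1 + ∑ i, w.2 i = y} := by
  refine Nat.card_congr
    { toFun := fun w => ⟨(w.val.1, fun k => w.val.2 (σ.symm k)), w.prop.1,
        fun k => w.prop.2.1 _, by
          show w.val.1 + ∑ k, w.val.2 (σ.symm k) = y
          rw [Equiv.sum_comp σ.symm w.val.2]
          exact w.prop.2.2⟩
      invFun := fun w => ⟨(w.val.1, fun i => w.val.2 (σ i)), w.prop.1,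
        fun i => w.prop.2.1 _, by
          show w.val.1 + ∑ i, w.val.2 (σ i) = y
          rw [Equiv.sum_comp σ w.val.2]
          exact w.prop.2.2⟩
      left_inv := fun w => by
        refine Subtype.ext (Prod.ext rfl (funext fun i => ?_))
        show w.val.2 (σ.symm (σ i)) = w.val.2 i
        rw [Equiv.symm_apply_apply]
      right_inv := fun w => by
        refine Subtype.ext (Prod.ext rfl (funext fun k => ?_))
        show w.val.2 (σ (σ.symm k)) = w.val.2 k
        rw [Equiv.apply_symm_apply] }

theorem dilate_count_modEq {A B : Set H} (h : IsTilingPair A B) {p : ℕ} (hp : p.Prime)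
    (y : H) :
    Nat.card {q : H × H // q.1 ∈ A ∧ q.2 ∈ B ∧ q.1 + p • q.2 = y}
      ≡ Nat.card B ^ (p - 1) [MOD p] := by
  haveI : NeZero p := ⟨hp.pos.ne'⟩
  haveI : Fact p.Prime := ⟨hp⟩
  set X := {w : H × (ZMod p → H) // w.1 ∈ A ∧ (∀ i, w.2 i ∈ B) ∧ w.1 + ∑ i, w.2 i = y}
    with hX
  have hsum_shift : ∀ (v : ZMod p → H) (a : ZMod p), ∑ i, v (i + a) = ∑ i, v i :=
    fun v a => Equiv.sum_comp (Equiv.addRight a) v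
  letI : SMul (Multiplicative (ZMod p)) X :=
    ⟨fun g w => ⟨(w.val.1, fun i => w.val.2 (i + g.toAdd)), w.prop.1,
      fun i => w.prop.2.1 _, by
        show w.val.1 + ∑ i, w.val.2 (i + g.toAdd) = y
        rw [hsum_shift]
        exact w.prop.2.2⟩⟩
  letI : MulAction (Multiplicative (ZMod p)) X :=
    { one_smul := fun w => by
        refine Subtype.ext (Prod.ext rfl (funext fun i => ?_))
        show w.val.2 (i + (1 : Multiplicative (ZMod p)).toAdd) = w.val.2 i
        norm_num
      mul_smul := fun a b w => by
        refine Subtype.ext (Prod.ext rfl (funext fun i => ?_))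
        show w.val.2 (i + (a * b).toAdd) = w.val.2 ((i + a.toAdd) + b.toAdd)
        rw [toAdd_mul, ← add_assoc] }
  have hPG : IsPGroup p (Multiplicative (ZMod p)) := by
    refine IsPGroup.of_card (n := 1) ?_
    rw [pow_one]
    simp [Nat.card_eq_fintype_card, ZMod.card]
  have hcongr := hPG.card_modEq_card_fixedPoints X
  have hXcard : Nat.card X = Nat.card B ^ (p - 1) := by
    have h2 : p - 1 + 1 = Fintype.card (ZMod p) := by rw [ZMod.card]; have := hp.pos; omega
    have hre := tuple_reindex ((finCongr h2).trans (Fintype.equivFin (ZMod p)).symm) A B y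
    rw [card_tuple_count h (p - 1) y] at hre
    exact hre.symm
  have hconst : ∀ (w : X), (∀ g : Multiplicative (ZMod p), g • w = w) →
      ∀ i : ZMod p, w.val.2 i = w.val.2 0 := by
    intro w hw i
    have h1 := hw (Multiplicative.ofAdd i)
    have h2 := congrArg (fun u : X => u.val.2 0) h1
    show w.val.2 i = w.val.2 0
    calc w.val.2 i = w.val.2 (0 + i) := by rw [zero_add]
      _ = w.val.2 0 := h2
  have hfix : Nat.card (MulAction.fixedPoints (Multiplicative (ZMod p)) X)
      = Nat.card {q : H × H // q.1 ∈ A ∧ q.2 ∈ B ∧ q.1 + p • q.2 = y} := by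
    refine Nat.card_congr
      { toFun := fun w => ⟨(w.val.val.1, w.val.val.2 0), w.val.prop.1,
          w.val.prop.2.1 0, ?_⟩
        invFun := fun q => ⟨⟨(q.val.1, fun _ => q.val.2), q.prop.1,
          fun _ => q.prop.2.1, ?_⟩, fun g => Subtype.ext rfl⟩
        left_inv := fun w => by
          refine Subtype.ext (Subtype.ext (Prod.ext rfl (funext fun i => ?_)))
          exact (hconst w.val w.prop i).symm
        right_inv := fun q => by
          exact Subtype.ext (Prod.ext rfl rfl) }
    · have hs := w.val.prop.2.2
      have hc := hconst w.val w.prop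
      rw [Finset.sum_congr rfl (fun i _ => hc i), Finset.sum_const, Finset.card_univ,
        ZMod.card] at hs
      exact hs
    · show q.val.1 + ∑ _i : ZMod p, q.val.2 = y
      rw [Finset.sum_const, Finset.card_univ, ZMod.card]
      exact q.prop.2.2
  calc Nat.card {q : H × H // q.1 ∈ A ∧ q.2 ∈ B ∧ q.1 + p • q.2 = y}
      = Nat.card (MulAction.fixedPoints (Multiplicative (ZMod p)) X) := hfix.symm
    _ ≡ Nat.card X [MOD p] := hcongr.symm
    _ = Nat.card B ^ (p - 1) := hXcard


theorem natCard_pos_left {A B : Set H} (h : IsTilingPair A B) : 0 < Nat.card A := by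
  have := tiling_nonempty_left h
  haveI : Nonempty A := this.to_subtype
  exact Nat.card_pos

theorem tiling_card_right_eq {A B B' : Set H} (h : IsTilingPair A B)
    (h' : IsTilingPair A B') : Nat.card B' = Nat.card B := by
  have h1 := tiling_card_mul h
  have h2 := tiling_card_mul h'
  exact Nat.eq_of_mul_eq_mul_left (natCard_pos_left h) (h2.trans h1.symm)

theorem tiling_dilate_prime {A B : Set H} (h : IsTilingPair A B) {p : ℕ} (hp : p.Prime)
    (hpB : ¬ p ∣ Nat.card B) : IsTilingPair A ((fun b => p • b) '' B) := by
  have hfermat : Nat.card B ^ (p - 1) ≡ 1 [MOD p] := by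
    have hco : Nat.Coprime (Nat.card B) p :=
      Nat.coprime_comm.mp ((Nat.Prime.coprime_iff_not_dvd hp).mpr hpB)
    have := Nat.ModEq.pow_totient hco
    rwa [Nat.totient_prime hp] at this
  have hcong : ∀ y : H, Nat.card {q : H × H // q.1 ∈ A ∧ q.2 ∈ B ∧ q.1 + p • q.2 = y}
      ≡ 1 [MOD p] := fun y => (dilate_count_modEq h hp y).trans hfermat
  have hsum : ∑ y : H, Nat.card {q : H × H // q.1 ∈ A ∧ q.2 ∈ B ∧ q.1 + p • q.2 = y}
      = Fintype.card H := by
    rw [sum_repr_counts A B (fun b => p • b)]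
    exact tiling_card_mul h
  have hpos : ∀ y : H, 1 ≤ Nat.card {q : H × H // q.1 ∈ A ∧ q.2 ∈ B ∧ q.1 + p • q.2 = y} := by
    intro y
    rcases Nat.eq_zero_or_pos (Nat.card {q : H × H // q.1 ∈ A ∧ q.2 ∈ B ∧ q.1 + p • q.2 = y})
      with h0 | h1
    · exfalso
      have := hcong y
      rw [h0] at this
      have h2 : 1 % p = 0 % p := this.symm
      rw [Nat.mod_eq_of_lt hp.one_lt, Nat.zero_mod] at h2
      exact one_ne_zero h2
    · exact h1
  have hone : ∀ y : H, Nat.card {q : H × H // q.1 ∈ A ∧ q.2 ∈ B ∧ q.1 + p • q.2 = y} = 1 := by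
    by_contra hc
    push_neg at hc
    obtain ⟨y0, hy0⟩ := hc
    have hgt : 1 < Nat.card {q : H × H // q.1 ∈ A ∧ q.2 ∈ B ∧ q.1 + p • q.2 = y0} :=
      lt_of_le_of_ne (hpos y0) (Ne.symm hy0)
    have hlt : ∑ y : H, (1 : ℕ) < ∑ y : H,
        Nat.card {q : H × H // q.1 ∈ A ∧ q.2 ∈ B ∧ q.1 + p • q.2 = y} := by
      refine Finset.sum_lt_sum (fun i _ => hpos i) ⟨y0, Finset.mem_univ y0, hgt⟩
    rw [hsum] at hlt
    simp at hlt
  intro y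
  obtain ⟨⟨a, b⟩, ⟨ha, hb, hab⟩, hu⟩ := (existsUnique_iff_natCard
    (fun q : H × H => q.1 ∈ A ∧ q.2 ∈ B ∧ q.1 + p • q.2 = y)).mpr (hone y)
  refine ⟨(a, p • b), ⟨ha, ⟨b, hb, rfl⟩, hab⟩, ?_⟩
  rintro ⟨a', z⟩ ⟨ha', ⟨b', hb', rfl⟩, hab'⟩
  have := hu (a', b') ⟨ha', hb', hab'⟩
  simp only [Prod.mk.injEq] at this ⊢
  exact ⟨this.1, by rw [this.2]⟩

theorem tiling_dilate {A : Set H} : ∀ t : ℕ, 0 < t → ∀ B : Set H, IsTilingPair A B →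
    Nat.Coprime t (Nat.card B) → IsTilingPair A ((fun b => t • b) '' B) := by
  intro t
  induction t using Nat.recOnMul with
  | zero => intro h0; exact absurd h0 (lt_irrefl 0)
  | one =>
    intro _ B hB _
    have : (fun b : H => (1 : ℕ) • b) '' B = B := by
      simp [one_nsmul]
    rwa [this]
  | prime p hp =>
    intro _ B hB hco
    exact tiling_dilate_prime hB hp ((Nat.Prime.coprime_iff_not_dvd hp).mp hco)
  | mul a b iha ihb =>
    intro hab B hB hco
    rcases Nat.eq_zero_or_pos a with rfl | ha
    · simp at hab
    rcases Nat.eq_zero_or_pos b with rfl | hb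
    · simp at hab
    have hBb := ihb hb B hB (hco.coprime_dvd_left (dvd_mul_left b a))
    have hcard : Nat.card ((fun x : H => b • x) '' B) = Nat.card B :=
      tiling_card_right_eq hB hBb
    have hBa := iha ha _ hBb (by rw [hcard]; exact hco.coprime_dvd_left (dvd_mul_right a b))
    have himg : (fun x : H => a • x) '' ((fun x : H => b • x) '' B)
        = (fun x : H => (a * b) • x) '' B := by
      rw [← Set.image_comp]
      apply Set.image_congr'
      intro x
      show a • b • x = (a * b) • x
      rw [mul_smul]
    rwa [himg] at hBa


theorem addOrderOf_dvd_ncard_of_invariant {S : Set H} {v : H}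
    (hv : (fun x => x + v) '' S = S) : addOrderOf v ∣ Nat.card S := by
  classical
  set k := addOrderOf v with hk
  have hk0 : 0 < k := addOrderOf_pos v
  have hkv : k • v = 0 := addOrderOf_nsmul_eq_zero v
  have hsmul_mod : ∀ a : ℕ, a • v = (a % k) • v := by
    intro a
    conv_lhs => rw [← Nat.mod_add_div a k]
    rw [add_nsmul, mul_comm, mul_smul, hkv, smul_zero, add_zero]
  have hcancel : ∀ a b : ℕ, a ≤ b → a • v = b • v → k ∣ b - a := by
    intro a b hle hab
    have h1 : (b - a) • v + a • v = b • v := by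
      rw [← add_nsmul, Nat.sub_add_cancel hle]
    rw [← hab] at h1
    have h2 : (b - a) • v = 0 := by
      have h3 : (b - a) • v + a • v = 0 + a • v := by rw [zero_add]; exact h1
      exact add_right_cancel h3
    exact addOrderOf_dvd_iff_nsmul_eq_zero.mpr h2
  rw [Nat.card_coe_set_eq]
  suffices hN : ∀ N : ℕ, ∀ S : Set H, (fun x => x + v) '' S = S → S.ncard = N → k ∣ N by
    exact hN S.ncard S hv rfl
  intro N
  induction N using Nat.strong_induction_on with
  | _ N ih =>
    intro S hS hN
    rcases S.eq_empty_or_nonempty with rfl | ⟨x, hx⟩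
    · rw [Set.ncard_empty] at hN
      rw [← hN]
      exact dvd_zero k
    · set O : Set H := Set.range (fun r : Fin k => x + r.1 • v) with hO
      have hinj : Function.Injective (fun r : Fin k => x + r.1 • v) := by
        intro a b hab
        simp only [add_right_inj] at hab
        rcases le_total a.1 b.1 with hle | hle
        · have hdvd := hcancel a.1 b.1 hle hab
          have hz : b.1 - a.1 = 0 := Nat.eq_zero_of_dvd_of_lt hdvd (by omega) |>.symm ▸ rfl
          exact Fin.ext (by omega)
        · have hdvd := hcancel b.1 a.1 hle hab.symm
          have hz : a.1 - b.1 = 0 := Nat.eq_zero_of_dvd_of_lt hdvd (by omega) |>.symm ▸ rfl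
          exact Fin.ext (by omega)
      have hOcard : O.ncard = k := by
        rw [← Nat.card_coe_set_eq, Nat.card_congr (Equiv.ofInjective _ hinj).symm]
        simp [Nat.card_eq_fintype_card]
      have hOsub : O ⊆ S := by
        rintro z ⟨r, rfl⟩
        exact (shift_mem_iff_nsmul hS r.1 x).mp hx
      have hOiff : ∀ z, z ∈ O ↔ z + v ∈ O := by
        intro z
        constructor
        · rintro ⟨r, rfl⟩
          refine ⟨⟨(r.1 + 1) % k, Nat.mod_lt _ hk0⟩, ?_⟩
          show x + ((r.1 + 1) % k) • v = x + r.1 • v + v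
          rw [← hsmul_mod, succ_nsmul, add_assoc]
        · rintro ⟨r, hr⟩
          refine ⟨⟨(r.1 + (k - 1)) % k, Nat.mod_lt _ hk0⟩, ?_⟩
          show x + ((r.1 + (k - 1)) % k) • v = z
          have h1 : x + ((r.1 + (k - 1)) % k) • v + v = z + v := by
            rw [← hsmul_mod, add_assoc, ← succ_nsmul]
            have h2 : r.1 + (k - 1) + 1 = r.1 + k := by omega
            rw [h2, add_nsmul, hkv, add_zero]
            exact hr
          exact add_right_cancel h1
      have hS' : (fun z => z + v) '' (S \ O) = S \ O := by
        apply image_shift_eq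
        intro z
        rw [Set.mem_diff, Set.mem_diff, ← shift_mem_iff hS z, ← hOiff z]
      have hsplit : (S \ O).ncard + O.ncard = S.ncard :=
        Set.ncard_diff_add_ncard_of_subset hOsub (Set.toFinite S)
      have hlt : (S \ O).ncard < N := by omega
      have hdvd' := ih _ hlt (S \ O) hS' rfl
      have : N = (S \ O).ncard + k := by omega
      rw [this]
      exact Nat.dvd_add hdvd' dvd_rfl


variable {m : ℕ} [NeZero m]

theorem prod_nsmul' {α β : Type*} [AddMonoid α] [AddMonoid β] (k : ℕ) (a : α) (b : β) :
    k • ((a, b) : α × β) = (k • a, k • b) := by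
  induction k with
  | zero => simp; rfl
  | succ k ih => rw [succ_nsmul, succ_nsmul, succ_nsmul, ih, Prod.mk_add_mk]

theorem sigma_tiling (T' : ZMod m → Set H) (W : Set H)
    (hT' : ∀ j, IsTilingPair W (T' j)) :
    IsTilingPair {x : H × ZMod m | x.1 ∈ T' x.2} (W ×ˢ ({0} : Set (ZMod m))) := by
  rintro ⟨x, k⟩
  obtain ⟨⟨w, t⟩, ⟨hw, ht, hs⟩, hu⟩ := hT' k x
  refine ⟨((t, k), (w, 0)), ⟨ht, ⟨hw, rfl⟩, ?_⟩, ?_⟩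
  · show (t + w, k + 0) = (x, k)
    rw [add_comm t w, hs, add_zero]
  · rintro ⟨⟨t', j'⟩, ⟨w', l'⟩⟩ ⟨h1, ⟨hw', hl'⟩, h3⟩
    have hl0 : l' = 0 := hl'
    rw [hl0] at h3
    have h3' : (t' + w', j' + 0) = (x, k) := h3
    simp only [Prod.mk.injEq, add_zero] at h3'
    have hj : j' = k := h3'.2
    rw [hj] at h1
    have := hu (w', t') ⟨hw', h1, by rw [add_comm]; exact h3'.1⟩
    simp only [Prod.mk.injEq] at this ⊢
    exact ⟨⟨this.2, hj⟩, this.1, hl0⟩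

theorem sigma_complement_fiber (T' : ZMod m → Set H) (C : Set H)
    (h : IsTilingPair {x : H × ZMod m | x.1 ∈ T' x.2} (C ×ˢ ({0} : Set (ZMod m))))
    (j : ZMod m) : IsTilingPair (T' j) C := by
  intro x
  obtain ⟨⟨⟨t, i⟩, ⟨c, l⟩⟩, ⟨h1, ⟨hc, hl⟩, h3⟩, hu⟩ := h (x, j)
  have hl0 : l = 0 := hl
  rw [hl0] at h3
  have h3' : (t + c, i + 0) = (x, j) := h3
  simp only [Prod.mk.injEq, add_zero] at h3'
  have hi : i = j := h3'.2
  have h1' : t ∈ T' j := by rw [← hi]; exact h1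
  refine ⟨(t, c), ⟨h1', hc, h3'.1⟩, ?_⟩
  rintro ⟨t', c'⟩ ⟨k1, k2, k3⟩
  have := hu ((t', j), (c', 0)) ⟨k1, ⟨k2, rfl⟩, by
    show (t' + c', j + 0) = (x, j)
    rw [k3, add_zero]⟩
  simp only [Prod.mk.injEq] at this ⊢
  exact ⟨this.1.1, this.2.1⟩

end TilingAux

open TilingAux in
theorem not_hasPT_prod_of_complements (G : Type*) [AddCommGroup G] [Fintype G]
    (Ω : Set G) (n : ℕ) (hn : 2 ≤ n) (T : Fin n → Set G)
    (hT : ∀ i, IsTilingPair Ω (T i))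
    (hdist : Function.Injective T)
    (hnoper : ¬ ∃ g : G, g ≠ 0 ∧ ∀ i, (fun t => t + g) '' T i = T i)
    (hinter : ∀ Ω' : Set G, (∀ i, IsTilingPair (T i) Ω') → ¬ IsPeriodic Ω')
    (m : ℕ) (hm : n ≤ m) (hgcd : Nat.gcd m (Fintype.card G) = 1) :
    ¬ HasPT (G × ZMod m) := by
  classical
  intro hPT
  haveI : NeZero m := ⟨by omega⟩
  by_cases hG1 : Fintype.card G ≤ 1
  · haveI : Subsingleton G := Fintype.card_le_one_iff_subsingleton.mp hG1
    have hne0 : (T ⟨0, by omega⟩).Nonempty := tiling_nonempty_right (hT _)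
    have hne1 : (T ⟨1, by omega⟩).Nonempty := tiling_nonempty_right (hT _)
    have hTeq : T ⟨0, by omega⟩ = T ⟨1, by omega⟩ := by
      ext x
      obtain ⟨y, hy⟩ := hne0
      obtain ⟨z, hz⟩ := hne1
      constructor
      · intro _; rwa [Subsingleton.elim x z]
      · intro _; rwa [Subsingleton.elim x y]
    have h01 := hdist hTeq
    simp only [Fin.mk.injEq] at h01
    omega
  · push_neg at hG1
    set f : ZMod m → Fin n := fun j =>
      ⟨min j.val (n - 1), lt_of_le_of_lt (min_le_right _ _) (by omega)⟩ with hf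
    have hfsurj : ∀ i : Fin n, f ((i.1 : ZMod m)) = i := by
      intro i
      have hval : ((i.1 : ZMod m)).val = i.1 := ZMod.val_cast_of_lt (by omega)
      apply Fin.ext
      show min ((i.1 : ZMod m)).val (n - 1) = i.1
      rw [hval]
      have := i.2
      omega
    have hfd : ∀ d : ZMod m, f d = f 0 → d = 0 := by
      intro d hd
      have h1 : min d.val (n - 1) = min (0 : ZMod m).val (n - 1) := congrArg Fin.val hd
      rw [ZMod.val_zero] at h1
      have hdval : d.val = 0 := by omega
      exact (ZMod.val_eq_zero d).mp hdval
    set Sg : Set (G × ZMod m) := {x : G × ZMod m | x.1 ∈ T (f x.2)} with hSg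
    have hStile : IsTilingPair Sg (Ω ×ˢ ({0} : Set (ZMod m))) :=
      sigma_tiling (fun j => T (f j)) Ω (fun j => hT (f j))
    rcases hPT Sg (Ω ×ˢ ({0} : Set (ZMod m))) hStile with hper | ⟨B, hBper, hBtile⟩
    · -- Sigma periodic : contradiction
      obtain ⟨hne, ⟨g, d⟩, hgd0, himg⟩ := hper
      have hmem : ∀ x : G × ZMod m, x ∈ Sg ↔ x + (g, d) ∈ Sg := shift_mem_iff himg
      set k := addOrderOf d with hkdef
      have hkd : k • d = 0 := addOrderOf_nsmul_eq_zero d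
      have hstep : ∀ (t : G) (j : ZMod m), t ∈ T (f j) ↔ t + k • g ∈ T (f j) := by
        intro t j
        have h1 := shift_mem_iff_nsmul himg k ((t, j) : G × ZMod m)
        have key : ((t, j) : G × ZMod m) + k • ((g, d) : G × ZMod m) = (t + k • g, j) := by
          rw [prod_nsmul', hkd, Prod.mk_add_mk, add_zero]
        rw [key] at h1
        simp only [hSg, Set.mem_setOf_eq] at h1
        exact h1
      have himgT : ∀ i, (fun t => t + k • g) '' T i = T i := by
        intro i
        apply image_shift_eq
        intro t
        have h2 := hstep t ((i.1 : ZMod m))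
        rwa [hfsurj i] at h2
      have hkg0 : k • g = 0 := by
        by_contra hne'
        exact hnoper ⟨k • g, hne', himgT⟩
      have hog : addOrderOf g ∣ k := addOrderOf_dvd_iff_nsmul_eq_zero.mpr hkg0
      have hkm : k ∣ m := by
        apply addOrderOf_dvd_iff_nsmul_eq_zero.mpr
        rw [nsmul_eq_mul, ZMod.natCast_self, zero_mul]
      have hogG : addOrderOf g ∣ Fintype.card G := addOrderOf_dvd_card
      have hg0 : g = 0 := by
        have h1 : addOrderOf g ∣ Nat.gcd m (Fintype.card G) :=
          Nat.dvd_gcd (hog.trans hkm) hogG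
        rw [hgcd] at h1
        exact AddMonoid.addOrderOf_eq_one_iff.mp (Nat.dvd_one.mp h1)
      have hTeq : ∀ j : ZMod m, T (f j) = T (f (j + d)) := by
        intro j
        ext t
        have h1 := hmem (t, j)
        have key : ((t, j) : G × ZMod m) + (g, d) = (t, j + d) := by
          rw [Prod.mk_add_mk, hg0, add_zero]
        rw [key] at h1
        simp only [hSg, Set.mem_setOf_eq] at h1
        exact h1
      have hd0 : d = 0 := by
        apply hfd
        have h2 := hdist (hTeq 0)
        rw [zero_add] at h2
        exact h2.symm
      exact hgd0 (by rw [hg0, hd0]; rfl)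
    · -- periodic complement B : contradiction
      obtain ⟨hBne, ⟨g, d⟩, hgd0, hBimg⟩ := hBper
      have hcardT0 := tiling_card_mul (hT ⟨0, by omega⟩)
      have hΩdvd : Nat.card Ω ∣ Fintype.card G := ⟨Nat.card (T ⟨0, by omega⟩), hcardT0.symm⟩
      have hcardprod : Nat.card (Ω ×ˢ ({0} : Set (ZMod m))) = Nat.card Ω := by
        rw [Nat.card_congr (Equiv.Set.prod Ω ({0} : Set (ZMod m))), Nat.card_prod]
        have : Nat.card ({0} : Set (ZMod m)) = 1 := by
          rw [Nat.card_coe_set_eq, Set.ncard_singleton]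
        rw [this, mul_one]
      have hcardB : Nat.card B = Nat.card Ω := by
        rw [← hcardprod]
        exact tiling_card_right_eq hStile hBtile
      by_cases hg : g = 0
      · have hd : d ≠ 0 := by
          intro hd0; exact hgd0 (by rw [hg, hd0]; rfl)
        have hdvd1 : addOrderOf ((g, d) : G × ZMod m) ∣ Nat.card B :=
          addOrderOf_dvd_ncard_of_invariant hBimg
        have hord_eq : addOrderOf ((g, d) : G × ZMod m) = addOrderOf d := by
          apply Nat.dvd_antisymm
          · apply addOrderOf_dvd_iff_nsmul_eq_zero.mpr
            rw [prod_nsmul', hg, smul_zero, addOrderOf_nsmul_eq_zero d]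
            rfl
          · apply addOrderOf_dvd_iff_nsmul_eq_zero.mpr
            have h1 : addOrderOf ((g, d) : G × ZMod m) • ((g, d) : G × ZMod m) = 0 :=
              addOrderOf_nsmul_eq_zero _
            rw [prod_nsmul'] at h1
            exact congrArg Prod.snd h1
        have hdm : addOrderOf d ∣ m := by
          apply addOrderOf_dvd_iff_nsmul_eq_zero.mpr
          rw [nsmul_eq_mul, ZMod.natCast_self, zero_mul]
        have hdB : addOrderOf d ∣ Nat.card B := hord_eq ▸ hdvd1
        have hdG : addOrderOf d ∣ Fintype.card G :=
          dvd_trans hdB (by rw [hcardB]; exact hΩdvd)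
        have h1 : addOrderOf d ∣ Nat.gcd m (Fintype.card G) := Nat.dvd_gcd hdm hdG
        rw [hgcd] at h1
        exact hd (AddMonoid.addOrderOf_eq_one_iff.mp (Nat.dvd_one.mp h1))
      · have hco : Nat.Coprime (Fintype.card G) m := Nat.coprime_comm.mp hgcd
        obtain ⟨t₀, ht1, ht2⟩ := Nat.chineseRemainder hco 1 0
        have htpos : 0 < t₀ := by
          rcases Nat.eq_zero_or_pos t₀ with rfl | h
          · exfalso
            have h3 : 0 % Fintype.card G = 1 % Fintype.card G := ht1
            rw [Nat.zero_mod, Nat.mod_eq_of_lt hG1] at h3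
            exact one_ne_zero h3.symm
          · exact h
        have hmdvd : m ∣ t₀ := (Nat.modEq_zero_iff_dvd).mp ht2
        have hGdvd : Fintype.card G ∣ t₀ - 1 := (Nat.modEq_iff_dvd' htpos).mp ht1.symm
        have htG : ∀ x : G, t₀ • x = x := by
          intro x
          obtain ⟨c, hc⟩ := hGdvd
          have ht0 : t₀ = 1 + Fintype.card G * c := by omega
          rw [ht0, add_nsmul, one_nsmul, mul_comm, mul_smul, card_nsmul_eq_zero,
            smul_zero, add_zero]
        have htm : ∀ j : ZMod m, t₀ • j = 0 := by
          intro j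
          obtain ⟨c, hc⟩ := hmdvd
          have hmj : m • j = 0 := by
            rw [nsmul_eq_mul, ZMod.natCast_self, zero_mul]
          rw [hc, mul_comm, mul_smul, hmj, smul_zero]
        have htprod : ∀ x : G × ZMod m, t₀ • x = (x.1, 0) := by
          intro x
          rw [show (x : G × ZMod m) = (x.1, x.2) from rfl, prod_nsmul', htG, htm]
        have hcop : Nat.Coprime t₀ (Nat.card B) := by
          rw [hcardB]
          by_contra hnc
          obtain ⟨q, hq, hq1, hq2⟩ := Nat.Prime.not_coprime_iff_dvd.mp hnc
          have hqG : q ∣ Fintype.card G := hq2.trans hΩdvd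
          have hqt1 : q ∣ t₀ - 1 := hqG.trans hGdvd
          have hq1' : q ∣ 1 := by
            have h4 := Nat.dvd_sub hq1 hqt1
            rwa [Nat.sub_sub_self htpos] at h4
          exact Nat.Prime.ne_one hq (Nat.dvd_one.mp hq1')
        have hdil := tiling_dilate t₀ htpos B hBtile hcop
        set C : Set G := Prod.fst '' B with hC
        have himgid : (fun b : G × ZMod m => t₀ • b) '' B = C ×ˢ ({0} : Set (ZMod m)) := by
          ext y
          constructor
          · rintro ⟨b, hb, rfl⟩
            show t₀ • b ∈ C ×ˢ ({0} : Set (ZMod m))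
            rw [htprod b]
            exact ⟨⟨b, hb, rfl⟩, rfl⟩
          · rintro ⟨⟨b, hb, hb1⟩, hy2⟩
            refine ⟨b, hb, ?_⟩
            show t₀ • b = y
            rw [htprod b]
            have hy2' : y.2 = 0 := hy2
            exact Prod.ext hb1 hy2'.symm
        rw [himgid] at hdil
        have hfibers : ∀ i : Fin n, IsTilingPair (T i) C := by
          intro i
          have h5 := sigma_complement_fiber (fun j => T (f j)) C hdil ((i.1 : ZMod m))
          rwa [hfsurj i] at h5
        have hBiff : ∀ x : G × ZMod m, x ∈ B ↔ x + (g, d) ∈ B := shift_mem_iff hBimg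
        have hCper : (fun c => c + g) '' C = C := by
          apply image_shift_eq
          intro c
          constructor
          · rintro ⟨b, hb, rfl⟩
            exact ⟨b + (g, d), (hBiff b).mp hb, by rw [Prod.fst_add]⟩
          · rintro ⟨b, hb, hb1⟩
            refine ⟨b - (g, d), (hBiff _).mpr (by rwa [sub_add_cancel]), ?_⟩
            show (b - (g, d)).1 = c
            rw [Prod.fst_sub, hb1]
            exact add_sub_cancel_right c g
        have hCne : C.Nonempty := by
          obtain ⟨b, hb⟩ := hBne
          exact ⟨b.1, b, hb, rfl⟩
        exact hinter C hfibers ⟨hCne, g, hg, hCper⟩
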